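/- arXiv:math-ph/0211015 — 2 statements merged into one kernel-verified Lean document; each statement's English description precedes it below -/
import Mathlib

section
/- Fix an integer ν ≥ 1 and let W : ℤ^ν → [0,∞) be bounded with W(n) → 0 as |n|₁ → ∞. If the set of eigenvalues of H₀ + W lying in (2ν, ∞) is infinite, then there exists a sequence (φ_k)_{k≥1} of nonzero, finitely supported vectors in ℓ²(ℤ^ν) such that ⟨φ_k, (H₀ + W)φ_k⟩ > 2ν‖φ_k‖² for every k, and for k ≠ m every point p in the support of φ_k and every point q in the support of φ_m satisfy max_{1≤i≤ν} |p_i − q_i| ≥ 2. -/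
noncomputable section

open scoped ComplexConjugate

namespace DHKS

/-- The Hilbert space ℓ²(α; ℂ). -/
abbrev L2 (α : Type*) := lp (fun _ : α => ℂ) 2

variable {α β : Type*}

lemma memℓp_two_iff (f : α → ℂ) :
    Memℓp f 2 ↔ Summable (fun n => ‖f n‖ ^ (2 : ℝ)) := by
  rw [memℓp_gen_iff (by norm_num)]
  norm_num

lemma sum_sq_le (u : L2 α) (s : Finset α) :
    ∑ n ∈ s, ‖(u : α → ℂ) n‖ ^ (2:ℝ) ≤ ‖u‖ ^ (2:ℝ) := by
  simpa using lp.sum_rpow_le_norm_rpow (p := 2) (by norm_num) u s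

lemma norm_le_of_sum_sq (u : L2 α) {C : ℝ} (hC : 0 ≤ C)
    (h : ∀ s : Finset α, ∑ n ∈ s, ‖(u : α → ℂ) n‖ ^ (2:ℝ) ≤ C ^ (2:ℝ)) : ‖u‖ ≤ C := by
  refine lp.norm_le_of_forall_sum_le (p := 2) (by norm_num) hC ?_
  simpa using h

/-- Composition with an injective map, as a continuous linear map on ℓ². -/
def compOp (σ : α → β) (hσ : Function.Injective σ) : L2 β →L[ℂ] L2 α :=
  LinearMap.mkContinuous
    { toFun := fun u => ⟨fun n => (u : β → ℂ) (σ n), by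
        apply (memℓp_two_iff _).2
        exact ((memℓp_two_iff _).1 (lp.memℓp u)).comp_injective hσ⟩
      map_add' := by
        intro u v; apply lp.ext; funext n
        simp only [lp.coeFn_add, Pi.add_apply]
      map_smul' := by
        intro c u; apply lp.ext; funext n
        simp only [lp.coeFn_smul, Pi.smul_apply, RingHom.id_apply] }
    1 (by
      intro u
      rw [one_mul]
      refine norm_le_of_sum_sq _ (norm_nonneg u) (fun s => ?_)
      classical
      calc ∑ n ∈ s, ‖(u : β → ℂ) (σ n)‖ ^ (2:ℝ)
          = ∑ m ∈ s.image σ, ‖(u : β → ℂ) m‖ ^ (2:ℝ) := by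
            rw [Finset.sum_image (fun a _ b _ h => hσ h)]
        _ ≤ ‖u‖ ^ (2:ℝ) := sum_sq_le u _)

@[simp] lemma compOp_apply (σ : α → β) (hσ : Function.Injective σ) (u : L2 β) (n : α) :
    (compOp σ hσ u : α → ℂ) n = (u : β → ℂ) (σ n) := rfl

/-- Multiplication by a bounded real-valued function, as a continuous linear map on ℓ². -/
def mulOp (V : α → ℝ) (C : ℝ) (hC : ∀ n, |V n| ≤ C) : L2 α →L[ℂ] L2 α :=
  LinearMap.mkContinuous
    { toFun := fun u => ⟨fun n => (V n : ℂ) * (u : α → ℂ) n, by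
        apply (memℓp_two_iff _).2
        have h := (((memℓp_two_iff _).1 (lp.memℓp u)).mul_left ((max C 0) ^ (2:ℝ)))
        apply Summable.of_nonneg_of_le (fun n => by positivity) (fun n => ?_) h
        have h1 : ‖(V n : ℂ) * (u : α → ℂ) n‖ = |V n| * ‖(u : α → ℂ) n‖ := by
          rw [norm_mul, Complex.norm_real, Real.norm_eq_abs]
        rw [h1, Real.mul_rpow (abs_nonneg _) (norm_nonneg _)]
        have h3 : |V n| ^ (2:ℝ) ≤ (max C 0) ^ (2:ℝ) :=
          Real.rpow_le_rpow (abs_nonneg _) (le_max_of_le_left (hC n)) (by norm_num)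
        exact mul_le_mul_of_nonneg_right h3 (by positivity)⟩
      map_add' := by
        intro u v; apply lp.ext; funext n
        simp only [lp.coeFn_add, Pi.add_apply]
        ring
      map_smul' := by
        intro c u; apply lp.ext; funext n
        simp only [lp.coeFn_smul, Pi.smul_apply, RingHom.id_apply, smul_eq_mul]
        ring }
    (max C 0) (by
      intro u
      refine norm_le_of_sum_sq _ (by positivity) (fun s => ?_)
      have key : ∀ n ∈ s, ‖(V n : ℂ) * (u : α → ℂ) n‖ ^ (2:ℝ)
          ≤ (max C 0) ^ (2:ℝ) * ‖(u : α → ℂ) n‖ ^ (2:ℝ) := by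
        intro n _
        have h1 : ‖(V n : ℂ) * (u : α → ℂ) n‖ = |V n| * ‖(u : α → ℂ) n‖ := by
          rw [norm_mul, Complex.norm_real, Real.norm_eq_abs]
        rw [h1, Real.mul_rpow (abs_nonneg _) (norm_nonneg _)]
        have h3 : |V n| ^ (2:ℝ) ≤ (max C 0) ^ (2:ℝ) :=
          Real.rpow_le_rpow (abs_nonneg _) (le_max_of_le_left (hC n)) (by norm_num)
        exact mul_le_mul_of_nonneg_right h3 (by positivity)
      calc ∑ n ∈ s, ‖(V n : ℂ) * (u : α → ℂ) n‖ ^ (2:ℝ)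
          ≤ ∑ n ∈ s, (max C 0) ^ (2:ℝ) * ‖(u : α → ℂ) n‖ ^ (2:ℝ) := Finset.sum_le_sum key
        _ = (max C 0) ^ (2:ℝ) * ∑ n ∈ s, ‖(u : α → ℂ) n‖ ^ (2:ℝ) := by rw [Finset.mul_sum]
        _ ≤ (max C 0) ^ (2:ℝ) * ‖u‖ ^ (2:ℝ) :=
            mul_le_mul_of_nonneg_left (sum_sq_le u _) (by positivity)
        _ = (max C 0 * ‖u‖) ^ (2:ℝ) :=
            (Real.mul_rpow (le_max_right _ _) (norm_nonneg _)).symm)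

@[simp] lemma mulOp_apply (V : α → ℝ) (C : ℝ) (hC : ∀ n, |V n| ≤ C) (u : L2 α) (n : α) :
    (mulOp V C hC u : α → ℂ) n = (V n : ℂ) * (u : α → ℂ) n := rfl

/-- Extension by zero along an injective map, as a continuous linear map on ℓ². -/
def extOp (σ : α → β) (hσ : Function.Injective σ) : L2 α →L[ℂ] L2 β :=
  LinearMap.mkContinuous
    { toFun := fun u => ⟨Function.extend σ (u : α → ℂ) 0, by
        apply (memℓp_two_iff _).2
        have hpt : (fun b => ‖Function.extend σ (u : α → ℂ) 0 b‖ ^ (2:ℝ))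
            = Function.extend σ (fun a => ‖(u : α → ℂ) a‖ ^ (2:ℝ)) 0 := by
          funext b
          rcases em (∃ a, σ a = b) with ⟨a, rfl⟩ | hb
          · rw [hσ.extend_apply, hσ.extend_apply]
          · rw [Function.extend_apply' _ _ _ hb, Function.extend_apply' _ _ _ hb]
            simp [Real.zero_rpow (by norm_num : (2:ℝ) ≠ 0)]
        rw [hpt, summable_extend_zero hσ]
        exact (memℓp_two_iff _).1 (lp.memℓp u)⟩
      map_add' := by
        intro u v; apply lp.ext; funext b
        simp only [lp.coeFn_add, Pi.add_apply]
        rcases em (∃ a, σ a = b) with ⟨a, rfl⟩ | hb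
        · rw [hσ.extend_apply, hσ.extend_apply, hσ.extend_apply]
          simp [lp.coeFn_add]
        · rw [Function.extend_apply' _ _ _ hb, Function.extend_apply' _ _ _ hb,
            Function.extend_apply' _ _ _ hb]
          simp
      map_smul' := by
        intro c u; apply lp.ext; funext b
        simp only [lp.coeFn_smul, Pi.smul_apply, RingHom.id_apply, smul_eq_mul]
        rcases em (∃ a, σ a = b) with ⟨a, rfl⟩ | hb
        · rw [hσ.extend_apply, hσ.extend_apply]
          simp [lp.coeFn_smul]
        · rw [Function.extend_apply' _ _ _ hb, Function.extend_apply' _ _ _ hb]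
          simp }
    1 (by
      intro u
      rw [one_mul]
      refine norm_le_of_sum_sq _ (norm_nonneg u) (fun s => ?_)
      have hpt : (fun b => ‖Function.extend σ (u : α → ℂ) 0 b‖ ^ (2:ℝ))
          = Function.extend σ (fun a => ‖(u : α → ℂ) a‖ ^ (2:ℝ)) 0 := by
        funext b
        rcases em (∃ a, σ a = b) with ⟨a, rfl⟩ | hb
        · rw [hσ.extend_apply, hσ.extend_apply]
        · rw [Function.extend_apply' _ _ _ hb, Function.extend_apply' _ _ _ hb]
          simp [Real.zero_rpow (by norm_num : (2:ℝ) ≠ 0)]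
      have hsumm : Summable (fun a => ‖(u : α → ℂ) a‖ ^ (2:ℝ)) :=
        (memℓp_two_iff _).1 (lp.memℓp u)
      calc ∑ b ∈ s, ‖Function.extend σ (u : α → ℂ) 0 b‖ ^ (2:ℝ)
          ≤ ∑' b, ‖Function.extend σ (u : α → ℂ) 0 b‖ ^ (2:ℝ) := by
            refine Summable.sum_le_tsum s (fun b _ => by positivity) ?_
            rw [hpt, summable_extend_zero hσ]; exact hsumm
        _ = ∑' a, ‖(u : α → ℂ) a‖ ^ (2:ℝ) := by
            rw [hpt, tsum_extend_zero hσ]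
        _ = ‖u‖ ^ (2:ℝ) := by
            simpa using (lp.norm_rpow_eq_tsum (p := 2) (by norm_num) u).symm)

lemma extOp_apply (σ : α → β) (hσ : Function.Injective σ) (u : L2 α) (b : β) :
    (extOp σ hσ u : β → ℂ) b = Function.extend σ (u : α → ℂ) 0 b := rfl

/-- The real quadratic form ⟨φ, A φ⟩ of an operator. -/
def quadForm (A : L2 α →L[ℂ] L2 α) (φ : L2 α) : ℝ :=
  (inner ℂ φ (A φ) : ℂ).re

/-- `E` is an eigenvalue of the bounded operator `A`. -/
def IsEigenvalue (A : L2 α →L[ℂ] L2 α) (E : ℝ) : Prop :=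
  ∃ u : L2 α, u ≠ 0 ∧ A u = (E : ℂ) • u

lemma abs_mul_sq_le {γ x Cb : ℝ} (h : |x| ≤ Cb) : |γ * x ^ 2| ≤ |γ| * Cb ^ 2 := by
  have h1 := abs_le.1 h
  rw [abs_mul, abs_of_nonneg (sq_nonneg x)]
  exact mul_le_mul_of_nonneg_left (sq_le_sq' (by linarith [h1.1]) h1.2) (abs_nonneg γ)

end DHKS

namespace DHKS

/-! ## The lattice ℤ^ν -/

/-- The lattice `ℤ^ν`. -/
abbrev Zlat (ν : ℕ) := Fin ν → ℤ

/-- The ℓ¹-norm `|n|₁ = |n₁| + ⋯ + |n_ν|` of a lattice point. -/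
def normOne {ν : ℕ} (n : Zlat ν) : ℕ := ∑ i, (n i).natAbs

/-- The `i`-th standard unit vector in `ℤ^ν`. -/
def unitVec (ν : ℕ) (i : Fin ν) : Zlat ν := fun k => if k = i then 1 else 0

/-- The free discrete Schrödinger operator `(H₀ u)(n) = ∑_{|j|₁ = 1} u(n+j)`
on `ℓ²(ℤ^ν)`, written as the sum over translations by `± eᵢ`. -/
def H0 (ν : ℕ) : L2 (Zlat ν) →L[ℂ] L2 (Zlat ν) :=
  ∑ i : Fin ν,
    (compOp (fun n => n + unitVec ν i) (add_left_injective _) +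
      compOp (fun n => n + (-unitVec ν i)) (add_left_injective _))

lemma H0_apply {ν : ℕ} (u : L2 (Zlat ν)) (n : Zlat ν) :
    (H0 ν u : Zlat ν → ℂ) n =
      ∑ i : Fin ν, ((u : Zlat ν → ℂ) (n + unitVec ν i) + (u : Zlat ν → ℂ) (n - unitVec ν i)) := by
  simp [H0, ContinuousLinearMap.sum_apply, lp.coeFn_sum, Finset.sum_apply,
    ContinuousLinearMap.add_apply, lp.coeFn_add, Pi.add_apply, sub_eq_add_neg]
  exact Finset.sum_apply n _ _

/-- The unitary `(U φ)(n) = (-1)^{|n|₁} φ(n)`. -/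
def Uop (ν : ℕ) : L2 (Zlat ν) →L[ℂ] L2 (Zlat ν) :=
  mulOp (fun n => (-1 : ℝ) ^ normOne n) 1 (fun n => by simp [abs_pow])

/-- The discrete Schrödinger operator `H = H₀ + V` on `ℓ²(ℤ^ν)`. -/
def schrodinger (ν : ℕ) (V : Zlat ν → ℝ) (C : ℝ) (hC : ∀ n, |V n| ≤ C) :
    L2 (Zlat ν) →L[ℂ] L2 (Zlat ν) :=
  H0 ν + mulOp V C hC

/-- The quantity `Δ(φ₊, φ₋; V) = ⟨φ₊, (H-2ν)φ₊⟩ + ⟨φ₋, (-H-2ν)φ₋⟩`. -/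
def Delta (ν : ℕ) (V : Zlat ν → ℝ) (C : ℝ) (hC : ∀ n, |V n| ≤ C)
    (φp φm : L2 (Zlat ν)) : ℝ :=
  quadForm (schrodinger ν V C hC - ((2 * (ν:ℝ) : ℝ) : ℂ) • 1) φp +
    quadForm (-schrodinger ν V C hC - ((2 * (ν:ℝ) : ℝ) : ℂ) • 1) φm

end DHKS

namespace DHKS
set_option linter.dupNamespace false
open scoped InnerProductSpace
local notation "⟪" x ", " y "⟫" => @inner ℂ _ _ x y

lemma inner_compOp_translate {ν : ℕ} (e : Zlat ν) (u v : L2 (Zlat ν)) :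
    ⟪u, compOp (fun n => n + e) (add_left_injective _) v⟫
      = ⟪compOp (fun n => n + (-e)) (add_left_injective _) u, v⟫ := by
  rw [lp.inner_eq_tsum, lp.inner_eq_tsum]
  have h := (Equiv.addRight e).tsum_eq
    (f := fun m => (⟪((compOp (fun n => n + (-e)) (add_left_injective _) u : L2 (Zlat ν)) : Zlat ν → ℂ) m,
      ((v : L2 (Zlat ν)) : Zlat ν → ℂ) m⟫ : ℂ))
  rw [← h]
  refine tsum_congr fun n => ?_
  simp [compOp_apply, Equiv.addRight, add_neg_cancel_right]


lemma inner_mulOp {ν : ℕ} (V : Zlat ν → ℝ) (C : ℝ) (hC : ∀ n, |V n| ≤ C) (u v : L2 (Zlat ν)) :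
    ⟪u, mulOp V C hC v⟫ = ⟪mulOp V C hC u, v⟫ := by
  rw [lp.inner_eq_tsum, lp.inner_eq_tsum]
  refine tsum_congr fun n => ?_
  simp only [mulOp_apply, RCLike.inner_apply, map_mul, Complex.conj_ofReal]
  ring

lemma inner_H0 {ν : ℕ} (u v : L2 (Zlat ν)) : ⟪u, H0 ν v⟫ = ⟪H0 ν u, v⟫ := by
  simp only [H0, ContinuousLinearMap.sum_apply, ContinuousLinearMap.add_apply]
  rw [inner_sum, sum_inner]
  refine Finset.sum_congr rfl fun i _ => ?_
  rw [inner_add_right, inner_add_left, inner_compOp_translate,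
    inner_compOp_translate (-(unitVec ν i))]
  rw [neg_neg, add_comm]

lemma inner_H {ν : ℕ} (W : Zlat ν → ℝ) (C : ℝ) (hC : ∀ n, |W n| ≤ C) (u v : L2 (Zlat ν)) :
    ⟪u, (H0 ν + mulOp W C hC) v⟫ = ⟪(H0 ν + mulOp W C hC) u, v⟫ := by
  simp only [ContinuousLinearMap.add_apply, inner_add_right, inner_add_left,
    inner_H0, inner_mulOp]

lemma inner_combo {ν : ℕ} {N : ℕ} (u : Fin N → L2 (Zlat ν))
    (horth : ∀ j k, j ≠ k → ⟪u j, u k⟫ = 0) (a b : Fin N → ℂ) :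
    ⟪∑ j, a j • u j, ∑ j, b j • u j⟫
      = ∑ j, conj (a j) * b j * ⟪u j, u j⟫ := by
  rw [sum_inner]
  refine Finset.sum_congr rfl fun j _ => ?_
  rw [inner_sum]
  rw [Finset.sum_eq_single j (fun k _ hk => by
    rw [inner_smul_left, inner_smul_right, horth j k (Ne.symm hk), mul_zero, mul_zero])
    (fun h => absurd (Finset.mem_univ j) h)]
  rw [inner_smul_left, inner_smul_right]
  ring

set_option maxHeartbeats 1000000 in
lemma key {ν : ℕ} (W : Zlat ν → ℝ) (C : ℝ) (hC : ∀ n, |W n| ≤ C)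
    (hinf : {E : ℝ | IsEigenvalue (H0 ν + mulOp W C hC) E ∧ 2 * (ν:ℝ) < E}.Infinite)
    (F : Finset (Zlat ν)) :
    ∃ φ : L2 (Zlat ν), φ ≠ 0 ∧ (Function.support ((φ : Zlat ν → ℂ))).Finite ∧
      quadForm (H0 ν + mulOp W C hC) φ > 2 * (ν:ℝ) * ‖φ‖ ^ 2 ∧
      ∀ p ∈ Function.support ((φ : Zlat ν → ℂ)), p ∉ F := by
  classical
  set H := H0 ν + mulOp W C hC with hHdef
  set N := F.card + 1 with hNdef
  let emb := hinf.natEmbedding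
  set E : Fin N → ℝ := fun j => (emb j.val : ℝ) with hEdef
  have hEinj : Function.Injective E := by
    intro j k h
    exact Fin.val_injective (emb.injective (Subtype.val_injective h))
  have hmem : ∀ j : Fin N, IsEigenvalue H (E j) ∧ 2 * (ν:ℝ) < E j := fun j => (emb j.val).2
  choose u hu0 hue using fun j => (hmem j).1
  have horth : ∀ j k, j ≠ k → ⟪u j, u k⟫ = 0 := by
    intro j k hjk
    have h1 : ⟪u j, H (u k)⟫ = ⟪H (u j), u k⟫ := inner_H W C hC _ _
    rw [hue j, hue k, inner_smul_right, inner_smul_left, Complex.conj_ofReal] at h1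
    have h2 : ((E k : ℂ) - E j) * ⟪u j, u k⟫ = 0 := by
      rw [sub_mul, h1]; ring
    rcases mul_eq_zero.1 h2 with h | h
    · exfalso
      apply hjk
      apply hEinj
      have h3 : (E k : ℂ) = E j := by linear_combination h
      exact_mod_cast h3.symm
    · exact h
  -- kernel argument
  let T : (Fin N → ℂ) →ₗ[ℂ] ({ x // x ∈ F } → ℂ) :=
    { toFun := fun a p => ∑ j, a j * (u j : Zlat ν → ℂ) p.val
      map_add' := by
        intro a b; funext p
        simp [add_mul, Finset.sum_add_distrib]
      map_smul' := by
        intro c a; funext p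
        simp [Finset.mul_sum, mul_assoc] }
  have hnotinj : ¬ Function.Injective T := by
    intro hinj
    have hle := LinearMap.finrank_le_finrank_of_injective hinj
    rw [Module.finrank_fintype_fun_eq_card, Module.finrank_fintype_fun_eq_card,
      Fintype.card_fin, Fintype.card_coe] at hle
    omega
  obtain ⟨a, b, hab, habne⟩ := Function.not_injective_iff.1 hnotinj
  set c : Fin N → ℂ := a - b with hcdef
  have hc0 : c ≠ 0 := sub_ne_zero.2 habne
  have hTc : T c = 0 := by rw [hcdef, map_sub, hab, sub_self]
  set ψ : L2 (Zlat ν) := ∑ j, c j • u j with hψdef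
  have hψF : ∀ p ∈ F, (ψ : Zlat ν → ℂ) p = 0 := by
    intro p hp
    have h1 : (ψ : Zlat ν → ℂ) p = T c ⟨p, hp⟩ := by
      simp [hψdef, lp.coeFn_sum, lp.coeFn_smul, T, Finset.sum_apply, smul_eq_mul]
      exact Finset.sum_apply p _ _
    rw [h1, hTc]
    rfl
  have hinner_self : ∀ j, ⟪u j, u j⟫ = ((‖u j‖^2 : ℝ) : ℂ) := fun j => by
    rw [inner_self_eq_norm_sq_to_K]; norm_cast
  have hψψ : ⟪ψ, ψ⟫ = ((∑ j, Complex.normSq (c j) * ‖u j‖^2 : ℝ) : ℂ) := by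
    rw [hψdef, inner_combo u horth c c]
    push_cast
    refine Finset.sum_congr rfl fun j _ => ?_
    rw [hinner_self j, Complex.normSq_eq_conj_mul_self]
    push_cast
    ring
  have hnorm : ‖ψ‖^2 = ∑ j, Complex.normSq (c j) * ‖u j‖^2 := by
    have h2 := norm_sq_eq_re_inner (𝕜 := ℂ) ψ
    rw [hψψ] at h2
    simpa only [RCLike.re_to_complex, Complex.ofReal_re] using h2
  have hHψ : H ψ = ∑ j, ((E j : ℂ) * c j) • u j := by
    rw [hψdef, map_sum]
    refine Finset.sum_congr rfl fun j _ => ?_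
    rw [map_smul, hue j, smul_smul, mul_comm]
  have hψHψ : ⟪ψ, H ψ⟫ = ((∑ j, E j * Complex.normSq (c j) * ‖u j‖^2 : ℝ) : ℂ) := by
    rw [hHψ, hψdef, inner_combo u horth c _]
    push_cast
    refine Finset.sum_congr rfl fun j _ => ?_
    rw [hinner_self j, Complex.normSq_eq_conj_mul_self]
    push_cast
    ring
  have hquad : quadForm H ψ = ∑ j, E j * Complex.normSq (c j) * ‖u j‖^2 := by
    rw [quadForm, hψHψ]
    exact Complex.ofReal_re _
  obtain ⟨j0, hj0⟩ : ∃ j, c j ≠ 0 := by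
    by_contra h
    push_neg at h
    exact hc0 (funext h)
  have hgap : 0 < quadForm H ψ - 2 * (ν:ℝ) * ‖ψ‖^2 := by
    rw [hquad, hnorm, Finset.mul_sum, ← Finset.sum_sub_distrib]
    refine Finset.sum_pos' (fun j _ => ?_) ⟨j0, Finset.mem_univ j0, ?_⟩
    · have h1 := (hmem j).2
      have h2 := Complex.normSq_nonneg (c j)
      have h3 := sq_nonneg ‖u j‖
      nlinarith [mul_nonneg (sub_nonneg.2 h1.le) (mul_nonneg h2 h3)]
    · have h1 := (hmem j0).2
      have h2 := Complex.normSq_pos.2 hj0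
      have h3 : 0 < ‖u j0‖^2 := by
        have := norm_pos_iff.2 (hu0 j0)
        positivity
      nlinarith [mul_pos (sub_pos.2 h1) (mul_pos h2 h3)]
  -- truncation
  have hsum : HasSum (fun n : Zlat ν => lp.single 2 n ((ψ : Zlat ν → ℂ) n)) ψ :=
    lp.hasSum_single (by norm_num) ψ
  set G : L2 (Zlat ν) → ℝ := fun v => quadForm H v - 2 * (ν:ℝ) * ‖v‖^2 with hGdef
  have hGcont : Continuous G := by
    apply Continuous.sub
    · exact Complex.continuous_re.comp (Continuous.inner continuous_id H.continuous)
    · exact continuous_const.mul (continuous_norm.pow 2)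
  have hGψ : 0 < G ψ := hgap
  have htend : Filter.Tendsto
      (fun s : Finset (Zlat ν) => G (∑ n ∈ s, lp.single 2 n ((ψ : Zlat ν → ℂ) n)))
      Filter.atTop (nhds (G ψ)) := (hGcont.tendsto ψ).comp hsum
  obtain ⟨s, hs⟩ := (htend.eventually (lt_mem_nhds hGψ)).exists
  set φ : L2 (Zlat ν) := ∑ n ∈ s, lp.single 2 n ((ψ : Zlat ν → ℂ) n) with hφdef
  have hcoe : ∀ m, (φ : Zlat ν → ℂ) m = if m ∈ s then (ψ : Zlat ν → ℂ) m else 0 := by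
    intro m
    simp [hφdef, lp.coeFn_sum, lp.single_apply, Finset.sum_apply, Finset.sum_dite_eq]
    refine (Finset.sum_apply (M := fun _ => ℂ) m s
      (fun i => ((lp.single 2 i ((ψ : Zlat ν → ℂ) i) : L2 (Zlat ν)) : Zlat ν → ℂ))).trans ?_
    simp [lp.single_apply, Pi.single_apply]
  have hGφ : 0 < G φ := hs
  have hφ0 : φ ≠ 0 := by
    intro h0
    rw [h0] at hGφ
    simp [hGdef, quadForm] at hGφ
  refine ⟨φ, hφ0, ?_, ?_, ?_⟩
  · refine Set.Finite.subset s.finite_toSet fun p hp => ?_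
    by_contra hps
    exact hp (by rw [hcoe p, if_neg (fun h => hps (Finset.mem_coe.2 h))])
  · have h9 := hGφ
    simp only [hGdef] at h9
    linarith
  · intro p hp hpF
    apply hp
    rw [hcoe p]
    by_cases hps : p ∈ s
    · rw [if_pos hps]; exact hψF p hpF
    · rw [if_neg hps]

theorem statement3' (ν : ℕ) (hν : 1 ≤ ν) (W : Zlat ν → ℝ) (hW : ∀ n, 0 ≤ W n)
    (C : ℝ) (hC : ∀ n, |W n| ≤ C)
    (hW0 : Filter.Tendsto W Filter.cofinite (nhds 0))
    (hinf : {E : ℝ | IsEigenvalue (H0 ν + mulOp W C hC) E ∧ 2 * (ν:ℝ) < E}.Infinite) :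
    ∃ φ : ℕ → L2 (Zlat ν),
      (∀ k, φ k ≠ 0) ∧
      (∀ k, (Function.support ((φ k : Zlat ν → ℂ))).Finite) ∧
      (∀ k, quadForm (H0 ν + mulOp W C hC) (φ k) > 2 * (ν:ℝ) * ‖φ k‖ ^ 2) ∧
      (∀ k m, k ≠ m → ∀ p ∈ Function.support ((φ k : Zlat ν → ℂ)),
        ∀ q ∈ Function.support ((φ m : Zlat ν → ℂ)), ∃ i : Fin ν, 2 ≤ |p i - q i|) := by
  classical
  choose pick h1 h2 h3 h4 using key W C hC hinf
  let box : Zlat ν → Finset (Zlat ν) := fun q =>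
    Finset.image (fun d => q + d) (Fintype.piFinset fun _ : Fin ν => ({-1, 0, 1} : Finset ℤ))
  let nbhd : Finset (Zlat ν) → Finset (Zlat ν) := fun F => F.biUnion box
  let S : ℕ → Finset (Zlat ν) := fun k =>
    Nat.rec ∅ (fun _ Sk => Sk ∪ (h2 (nbhd Sk)).toFinset) k
  have hSsucc : ∀ k, S (k + 1) = S k ∪ (h2 (nbhd (S k))).toFinset := fun k => rfl
  have hSmono : ∀ k, S k ⊆ S (k + 1) := fun k => by
    rw [hSsucc]; exact Finset.subset_union_left
  have hmono : ∀ k m, k ≤ m → S k ⊆ S m := by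
    intro k m h
    induction h with
    | refl => exact subset_rfl
    | step h2' ih => exact ih.trans (hSmono _)
  have hsupp : ∀ k, Function.support ((pick (nbhd (S k)) : Zlat ν → ℂ)) ⊆ ↑(S (k + 1)) := by
    intro k p hp
    rw [hSsucc]
    exact Finset.mem_coe.2 (Finset.mem_union_right _ ((h2 _).mem_toFinset.2 hp))
  have hsep : ∀ k m, k < m → ∀ p ∈ Function.support ((pick (nbhd (S k)) : Zlat ν → ℂ)),
      ∀ q ∈ Function.support ((pick (nbhd (S m)) : Zlat ν → ℂ)),
      ∃ i : Fin ν, 2 ≤ |p i - q i| := by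
    intro k m hkm p hp q hq
    have hpS : p ∈ S m := hmono (k + 1) m hkm (hsupp k hp)
    have hqn : q ∉ nbhd (S m) := h4 (nbhd (S m)) q hq
    by_contra hcon
    push_neg at hcon
    apply hqn
    refine Finset.mem_biUnion.2 ⟨p, hpS, ?_⟩
    refine Finset.mem_image.2 ⟨q - p, ?_, by abel⟩
    refine Fintype.mem_piFinset.2 fun i => ?_
    have hi := hcon i
    rw [abs_lt] at hi
    have hsub : (q - p) i = q i - p i := rfl
    simp only [Finset.mem_insert, Finset.mem_singleton, hsub]
    omega
  refine ⟨fun k => pick (nbhd (S k)), fun k => h1 _, fun k => h2 _, fun k => h3 _, ?_⟩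
  intro k m hkm p hp q hq
  rcases lt_or_gt_of_ne hkm with h | h
  · exact hsep k m h p hp q hq
  · obtain ⟨i, hi⟩ := hsep m k h q hq p hp
    exact ⟨i, by rwa [abs_sub_comm] at hi⟩

end DHKS

namespace DHKS

/-- Lemma 3.2: if `W ≥ 0`, `W(n) → 0` and `H₀ + W` has infinitely many
eigenvalues in `(2ν, ∞)`, then there is a sequence of nonzero finitely supported vectors
`φ_k` with `⟨φ_k, (H₀+W)φ_k⟩ > 2ν‖φ_k‖²` whose supports are pairwise at sup-distance ≥ 2. -/
theorem statement3 (ν : ℕ) (hν : 1 ≤ ν) (W : Zlat ν → ℝ) (hW : ∀ n, 0 ≤ W n)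
    (C : ℝ) (hC : ∀ n, |W n| ≤ C)
    (hW0 : Filter.Tendsto W Filter.cofinite (nhds 0))
    (hinf : {E : ℝ | IsEigenvalue (H0 ν + mulOp W C hC) E ∧ 2 * (ν:ℝ) < E}.Infinite) :
    ∃ φ : ℕ → L2 (Zlat ν),
      (∀ k, φ k ≠ 0) ∧
      (∀ k, (Function.support ((φ k : Zlat ν → ℂ))).Finite) ∧
      (∀ k, quadForm (H0 ν + mulOp W C hC) (φ k) > 2 * (ν:ℝ) * ‖φ k‖ ^ 2) ∧
      (∀ k m, k ≠ m → ∀ p ∈ Function.support ((φ k : Zlat ν → ℂ)),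
        ∀ q ∈ Function.support ((φ m : Zlat ν → ℂ)), ∃ i : Fin ν, 2 ≤ |p i - q i|) := by
  exact statement3' ν hν W hW C hC hW0 hinf

end DHKS
end
end

section
/- There exist constants 0 < c₁ ≤ c₂ < ∞ such that for every integer L ≥ 2 there exists φ_L ∈ ℓ²(ℤ²) supported in {(n₁,n₂) ∈ ℤ² : |n₁| + |n₂| ≤ L} with: (i) φ_L(0,0) = 1; (ii) 0 ≤ ⟨φ_L, (4 − H₀)φ_L⟩ ≤ c₂ / log(L+1); and (iii) c₁ L²/(log(L+1))² ≤ ‖φ_L‖² ≤ c₂ L²/(log(L+1))². -/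
noncomputable section

open scoped ComplexConjugate

namespace DHKS

/-! ## The free operator on ℓ²(ℤ²) -/

/-- The free discrete Schrödinger operator on `ℓ²(ℤ²)`:
`(H₀ u)(n) = ∑_{|j|₁=1} u(n+j)`, the sum over the four nearest neighbors. -/
def H0Z2 : L2 (ℤ × ℤ) →L[ℂ] L2 (ℤ × ℤ) :=
  compOp (fun n : ℤ × ℤ => n + (1, 0)) (add_left_injective _) +
    compOp (fun n : ℤ × ℤ => n + (-1, 0)) (add_left_injective _) +
    compOp (fun n : ℤ × ℤ => n + (0, 1)) (add_left_injective _) +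
    compOp (fun n : ℤ × ℤ => n + (0, -1)) (add_left_injective _)

@[simp] lemma H0Z2_apply (u : L2 (ℤ × ℤ)) (n : ℤ × ℤ) :
    (H0Z2 u : ℤ × ℤ → ℂ) n = (u : ℤ × ℤ → ℂ) (n + (1, 0)) + (u : ℤ × ℤ → ℂ) (n + (-1, 0)) +
      (u : ℤ × ℤ → ℂ) (n + (0, 1)) + (u : ℤ × ℤ → ℂ) (n + (0, -1)) := by
  simp [H0Z2, ContinuousLinearMap.add_apply, lp.coeFn_add, Pi.add_apply]

end DHKS

namespace DHKS

open Finset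

/-! ### Scalar sum estimates -/

private lemma Icc_insert_top {a b : ℤ} (h : a ≤ b + 1) :
    Finset.Icc a (b + 1) = insert (b + 1) (Finset.Icc a b) := by
  ext x; simp only [mem_Icc, mem_insert]; omega

private lemma cast_succ (M : ℕ) : ((M + 1 : ℕ) : ℤ) = (M : ℤ) + 1 := by push_cast; ring

private lemma nat_inv_sq : ∀ M : ℕ,
    ∑ k ∈ Finset.Icc (1 : ℤ) (M : ℤ), (1 : ℝ) / (k : ℝ) ^ 2 ≤ 2 - 2 / ((M : ℝ) + 1) := by
  intro M
  induction M with
  | zero => rw [Finset.Icc_eq_empty (by omega), Finset.sum_empty]; norm_num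
  | succ M ih =>
    rw [cast_succ, Icc_insert_top (by omega), Finset.sum_insert (by simp)]
    have hM : (0 : ℝ) ≤ (M : ℝ) := by positivity
    push_cast
    have key : 1 / ((M : ℝ) + 1) ^ 2 ≤ 2 / ((M : ℝ) + 1) - 2 / ((M : ℝ) + 2) := by
      rw [div_sub_div _ _ (by linarith) (by linarith), div_le_div_iff₀ (by positivity) (by positivity)]
      ring_nf; nlinarith
    rw [show ((M:ℝ) + 1 + 1) = (M:ℝ) + 2 from by ring]
    linarith

private lemma zsum_inv_sq (N : ℤ) :
    ∑ k ∈ Finset.Icc (1 : ℤ) N, (1 : ℝ) / (k : ℝ) ^ 2 ≤ 2 := by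
  rcases le_or_gt N 0 with h | h
  · rw [Finset.Icc_eq_empty (by omega), Finset.sum_empty]; norm_num
  · lift N to ℕ using (by omega : (0:ℤ) ≤ N) with M hM
    refine (nat_inv_sq M).trans ?_
    have : (0:ℝ) ≤ 2 / ((M:ℝ) + 1) := by positivity
    linarith

private lemma nat_inv_sq_shift (m : ℝ) (hm : 1 ≤ m) : ∀ M : ℕ,
    ∑ k ∈ Finset.Icc (1 : ℤ) (M : ℤ), (1 : ℝ) / ((k : ℝ) + m) ^ 2
      ≤ 1 / m - 1 / (m + (M : ℝ)) := by
  intro M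
  induction M with
  | zero => rw [Finset.Icc_eq_empty (by omega), Finset.sum_empty]; norm_num
  | succ M ih =>
    rw [cast_succ, Icc_insert_top (by omega), Finset.sum_insert (by simp)]
    have hM : (0 : ℝ) ≤ (M : ℝ) := by positivity
    push_cast
    have key : 1 / ((M : ℝ) + 1 + m) ^ 2 ≤ 1 / (m + (M : ℝ)) - 1 / (m + ((M : ℝ) + 1)) := by
      rw [div_sub_div _ _ (by linarith) (by linarith), div_le_div_iff₀ (by positivity) (by positivity)]
      ring_nf; nlinarith
    linarith

private lemma zsum_inv_sq_shift (m : ℝ) (hm : 1 ≤ m) (N : ℤ) :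
    ∑ k ∈ Finset.Icc (1 : ℤ) N, (1 : ℝ) / ((k : ℝ) + m) ^ 2 ≤ 1 / m := by
  rcases le_or_gt N 0 with h | h
  · rw [Finset.Icc_eq_empty (by omega), Finset.sum_empty]; positivity
  · lift N to ℕ using (by omega : (0:ℤ) ≤ N) with M hM
    refine (nat_inv_sq_shift m hm M).trans ?_
    have h1 : (0:ℝ) < m + (M:ℝ) := by positivity
    have : (0:ℝ) ≤ 1 / (m + (M:ℝ)) := by positivity
    linarith

private lemma nat_harmonic : ∀ M : ℕ, 1 ≤ M →
    ∑ k ∈ Finset.Icc (1 : ℤ) (M : ℤ), (1 : ℝ) / (k : ℝ) ≤ 1 + Real.log (M : ℝ) := by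
  intro M hM
  induction M, hM using Nat.le_induction with
  | base =>
    rw [show ((1:ℕ):ℤ) = 1 by norm_num, Finset.Icc_self, Finset.sum_singleton]
    simp
  | succ M hM ih =>
    rw [cast_succ, Icc_insert_top (by omega), Finset.sum_insert (by simp)]
    have hM' : (1 : ℝ) ≤ (M : ℝ) := by exact_mod_cast hM
    have h0 : (0:ℝ) < (M:ℝ) := by linarith
    have h1 : (0:ℝ) < (M:ℝ) + 1 := by linarith
    have hlog : Real.log ((M:ℝ) / ((M:ℝ) + 1)) ≤ (M:ℝ)/((M:ℝ) + 1) - 1 :=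
      Real.log_le_sub_one_of_pos (by positivity)
    rw [Real.log_div (by linarith) (by linarith)] at hlog
    have heq : (M:ℝ)/((M:ℝ) + 1) - 1 = -(1/((M:ℝ) + 1)) := by
      field_simp
      ring
    rw [heq] at hlog
    push_cast
    linarith

private lemma zsum_harmonic (N : ℤ) (hN : 0 ≤ N) :
    ∑ k ∈ Finset.Icc (1 : ℤ) N, (1 : ℝ) / (k : ℝ) ≤ 1 + Real.log ((N : ℝ) + 1) := by
  have hlog : (0:ℝ) ≤ Real.log ((N:ℝ) + 1) := by
    apply Real.log_nonneg
    have : (0:ℝ) ≤ (N:ℝ) := by exact_mod_cast hN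
    linarith
  rcases le_or_gt N 0 with h | h
  · rw [Finset.Icc_eq_empty (by omega), Finset.sum_empty]
    linarith
  · lift N to ℕ using (by omega : (0:ℤ) ≤ N) with M hM
    refine (nat_harmonic M (by exact_mod_cast h)).trans ?_
    have h0 : (0:ℝ) < (M:ℝ) := by exact_mod_cast h
    have := Real.log_le_log h0 (by linarith : (M:ℝ) ≤ (M:ℝ) + 1)
    push_cast
    linarith

private lemma nat_inv_sqrt : ∀ M : ℕ,
    ∑ k ∈ Finset.Icc (0 : ℤ) (M : ℤ), 1 / Real.sqrt ((k : ℝ) + 1)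
      ≤ 2 * Real.sqrt ((M : ℝ) + 1) := by
  intro M
  induction M with
  | zero =>
    rw [show ((0:ℕ):ℤ) = 0 by norm_num, Finset.Icc_self, Finset.sum_singleton]
    simp only [Int.cast_zero, zero_add, Real.sqrt_one]
    norm_num
  | succ M ih =>
    rw [cast_succ, Icc_insert_top (by omega), Finset.sum_insert (by simp)]
    have hM : (0 : ℝ) ≤ (M : ℝ) := by positivity
    set s := Real.sqrt ((M:ℝ) + 1) with hs
    set t := Real.sqrt ((M:ℝ) + 2) with ht
    have hs2 : s ^ 2 = (M:ℝ) + 1 := Real.sq_sqrt (by linarith)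
    have ht2 : t ^ 2 = (M:ℝ) + 2 := Real.sq_sqrt (by linarith)
    have hs0 : 0 ≤ s := Real.sqrt_nonneg _
    have ht0 : 0 < t := Real.sqrt_pos.2 (by linarith)
    have key : 1 / t ≤ 2 * t - 2 * s := by
      rw [div_le_iff₀ ht0]
      nlinarith [sq_nonneg (s - t)]
    push_cast
    have heq : ((M:ℝ) + 1) + 1 = (M:ℝ) + 2 := by ring
    rw [heq]
    linarith

private lemma zsum_inv_sqrt (N : ℤ) (hN : 0 ≤ N) :
    ∑ k ∈ Finset.Icc (0 : ℤ) N, 1 / Real.sqrt ((k : ℝ) + 1)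
      ≤ 2 * Real.sqrt ((N : ℝ) + 1) := by
  lift N to ℕ using hN with M hM
  exact nat_inv_sqrt M

private lemma nat_abs_Icc (u : ℤ → ℝ) : ∀ M : ℕ,
    ∑ a ∈ Finset.Icc (-(M : ℤ)) (M : ℤ), u |a|
      = u 0 + 2 * ∑ a ∈ Finset.Icc (1 : ℤ) (M : ℤ), u a := by
  intro M
  induction M with
  | zero => simp
  | succ M ih =>
    rw [cast_succ]
    have hins : Finset.Icc (-((M:ℤ)+1)) ((M:ℤ)+1)
        = insert (-((M:ℤ)+1)) (insert ((M:ℤ)+1) (Finset.Icc (-(M:ℤ)) (M:ℤ))) := by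
      ext x; simp only [mem_Icc, mem_insert]; omega
    rw [hins, Finset.sum_insert (by simp only [mem_insert, mem_Icc]; omega),
      Finset.sum_insert (by simp only [mem_Icc]; omega), ih,
      Icc_insert_top (by omega), Finset.sum_insert (by simp)]
    rw [abs_neg, abs_of_nonneg (by omega : (0:ℤ) ≤ (M:ℤ) + 1)]
    ring

private lemma zsum_abs_Icc (u : ℤ → ℝ) (L : ℤ) (hL : 0 ≤ L) :
    ∑ a ∈ Finset.Icc (-L) L, u |a| = u 0 + 2 * ∑ a ∈ Finset.Icc (1 : ℤ) L, u a := by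
  lift L to ℕ using hL with M hM
  exact nat_abs_Icc u M

private lemma log_le_two_sqrt {t : ℝ} (ht : 0 < t) : Real.log t ≤ 2 * Real.sqrt t := by
  rcases le_or_gt 1 t with h | h
  · have h1 : Real.log t = 2 * Real.log (Real.sqrt t) := by
      rw [Real.log_sqrt ht.le]; ring
    have h2 : Real.log (Real.sqrt t) ≤ Real.sqrt t - 1 :=
      Real.log_le_sub_one_of_pos (Real.sqrt_pos.2 ht)
    have := Real.sqrt_nonneg t
    linarith
  · have : Real.log t ≤ 0 := Real.log_nonpos ht.le h.le
    have := Real.sqrt_nonneg t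
    linarith

private lemma abs_log_sub_le {x y c : ℝ} (hx : 1 ≤ x) (hy : 1 ≤ y) (hxy : |x - y| ≤ 1)
    (hc : 0 < c) (hcx : c ≤ x) (hcy : c ≤ y) :
    |Real.log x - Real.log y| ≤ 1 / c := by
  have mono : ∀ a b : ℝ, 1 ≤ a → a ≤ b → b - a ≤ 1 → c ≤ a →
      Real.log b - Real.log a ≤ 1 / c := by
    intro a b ha hab hd hca
    have ha0 : (0:ℝ) < a := by linarith
    rw [← Real.log_div (by linarith) (ne_of_gt ha0)]
    have hb0 : (0:ℝ) < b := by linarith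
    calc Real.log (b / a) ≤ b / a - 1 := Real.log_le_sub_one_of_pos (by positivity)
      _ = (b - a) / a := by field_simp
      _ ≤ 1 / c := div_le_div₀ (by norm_num) hd hc hca
  have habs := abs_le.mp hxy
  rcases le_total x y with h | h
  · rw [abs_sub_comm, abs_of_nonneg (sub_nonneg.2 (Real.log_le_log (by linarith) h))]
    exact mono x y hx h (by linarith) hcx
  · rw [abs_of_nonneg (sub_nonneg.2 (Real.log_le_log (by linarith) h))]
    exact mono y x hy h (by linarith) hcy

/-! ### The test function -/

/-- ℓ¹ radius on `ℤ²`. -/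
def rad (n : ℤ × ℤ) : ℤ := |n.1| + |n.2|

lemma rad_nonneg (n : ℤ × ℤ) : 0 ≤ rad n := add_nonneg (abs_nonneg _) (abs_nonneg _)

lemma rad_add_le (n j : ℤ × ℤ) : rad (n + j) ≤ rad n + rad j := by
  unfold rad
  have h1 := abs_add_le n.1 j.1
  have h2 := abs_add_le n.2 j.2
  simp only [Prod.fst_add, Prod.snd_add]
  linarith

lemma rad_le_add (n j : ℤ × ℤ) : rad n ≤ rad (n + j) + rad j := by
  have := rad_add_le (n + j) (-j)
  simp only [add_neg_cancel_right] at this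
  have hj : rad (-j) = rad j := by unfold rad; simp [abs_neg]
  omega

/-- The box `[-M,M]²` as a finset. -/
def box (M : ℤ) : Finset (ℤ × ℤ) := Finset.Icc (-M) M ×ˢ Finset.Icc (-M) M

lemma mem_box {M : ℤ} {n : ℤ × ℤ} :
    n ∈ box M ↔ (-M ≤ n.1 ∧ n.1 ≤ M) ∧ (-M ≤ n.2 ∧ n.2 ≤ M) := by
  simp [box, Finset.mem_product, Finset.mem_Icc]

lemma box_mono {M M' : ℤ} (h : M ≤ M') : box M ⊆ box M' := by
  intro n hn
  rw [mem_box] at hn ⊢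
  omega

lemma mem_box_of_rad {M : ℤ} {n : ℤ × ℤ} (hM : 0 ≤ M) (h : rad n ≤ M) : n ∈ box M := by
  have h1 := abs_nonneg n.1
  have h2 := abs_nonneg n.2
  have hr : |n.1| + |n.2| ≤ M := h
  rw [mem_box]
  constructor
  · exact abs_le.mp (by omega)
  · exact abs_le.mp (by omega)

variable (L : ℤ)

lemma logL_pos (hL : 2 ≤ L) : 0 < Real.log ((L : ℝ) + 1) := by
  apply Real.log_pos
  have : (2:ℝ) ≤ (L:ℝ) := by exact_mod_cast hL
  linarith

lemma one_le_logL (hL : 2 ≤ L) : 1 ≤ Real.log ((L : ℝ) + 1) := by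
  have h3 : (3:ℝ) ≤ (L:ℝ) + 1 := by
    have : (2:ℝ) ≤ (L:ℝ) := by exact_mod_cast hL
    linarith
  have he := Real.exp_one_lt_d9
  calc (1:ℝ) = Real.log (Real.exp 1) := (Real.log_exp 1).symm
    _ ≤ Real.log ((L:ℝ) + 1) := Real.log_le_log (Real.exp_pos 1) (by linarith)

/-- The logarithmic test profile. -/
def fL (n : ℤ × ℤ) : ℝ :=
  max (1 - Real.log ((rad n : ℝ) + 1) / Real.log ((L : ℝ) + 1)) 0

lemma fL_nonneg (n : ℤ × ℤ) : 0 ≤ fL L n := le_max_right _ _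

lemma fL_zero (hL : 2 ≤ L) {n : ℤ × ℤ} (h : L ≤ rad n) : fL L n = 0 := by
  have hΛ := logL_pos L hL
  apply max_eq_right
  have hlog : Real.log ((L:ℝ) + 1) ≤ Real.log ((rad n : ℝ) + 1) := by
    apply Real.log_le_log (by positivity)
    have : (L:ℝ) ≤ (rad n : ℝ) := by exact_mod_cast h
    linarith
  have : 1 ≤ Real.log ((rad n : ℝ) + 1) / Real.log ((L:ℝ) + 1) :=
    (one_le_div hΛ).mpr hlog
  linarith

lemma fL_supp (hL : 2 ≤ L) {n : ℤ × ℤ} (h : fL L n ≠ 0) : rad n ≤ L := by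
  by_contra h'
  exact h (fL_zero L hL (by omega))

lemma fL_mem_box (hL : 2 ≤ L) {n : ℤ × ℤ} (h : fL L n ≠ 0) : n ∈ box L :=
  mem_box_of_rad (by omega) (fL_supp L hL h)

lemma fL_eq (hL : 2 ≤ L) (n : ℤ × ℤ) :
    fL L n = max (Real.log (((L:ℝ) + 1) / ((rad n : ℝ) + 1)) / Real.log ((L:ℝ) + 1)) 0 := by
  have hΛ := logL_pos L hL
  have hr0 : (0:ℝ) ≤ (rad n : ℝ) := by exact_mod_cast rad_nonneg n
  have hr : (0:ℝ) < (rad n : ℝ) + 1 := by linarith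
  unfold fL
  rw [Real.log_div (by positivity) (ne_of_gt hr)]
  congr 1
  field_simp

/-- The test function as an element of `ℓ²(ℤ²)`. -/
def φL (hL : 2 ≤ L) : L2 (ℤ × ℤ) :=
  ⟨fun n => ((fL L n : ℝ) : ℂ), by
    apply (memℓp_two_iff _).2
    apply summable_of_ne_finset_zero (s := box L)
    intro n hn
    have h0 : fL L n = 0 := by
      by_contra h
      exact hn (fL_mem_box L hL h)
    simp [h0]⟩

@[simp] lemma φL_apply (hL : 2 ≤ L) (n : ℤ × ℤ) :
    (φL L hL : ℤ × ℤ → ℂ) n = ((fL L n : ℝ) : ℂ) := rfl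

private lemma rpow_two_eq {x : ℝ} (hx : 0 ≤ x) : x ^ (2:ℝ) = x ^ 2 := by
  rw [show (2:ℝ) = ((2:ℕ):ℝ) by norm_num, Real.rpow_natCast]

lemma normsq_φL (hL : 2 ≤ L) : ‖φL L hL‖ ^ 2 = ∑ n ∈ box L, fL L n ^ 2 := by
  have h1 : ‖φL L hL‖ ^ (2:ℝ) = ∑' n, ‖(φL L hL : ℤ × ℤ → ℂ) n‖ ^ (2:ℝ) := by
    simpa using lp.norm_rpow_eq_tsum (p := 2) (by norm_num) (φL L hL)
  have h2 : (∑' n, ‖(φL L hL : ℤ × ℤ → ℂ) n‖ ^ (2:ℝ))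
      = ∑ n ∈ box L, ‖(φL L hL : ℤ × ℤ → ℂ) n‖ ^ (2:ℝ) := by
    apply tsum_eq_sum
    intro n hn
    have h0 : fL L n = 0 := by
      by_contra h
      exact hn (fL_mem_box L hL h)
    simp [h0, Real.zero_rpow (by norm_num : (2:ℝ) ≠ 0)]
  rw [← rpow_two_eq (norm_nonneg _), h1, h2]
  apply Finset.sum_congr rfl
  intro n _
  rw [φL_apply, Complex.norm_real, Real.norm_eq_abs, abs_of_nonneg (fL_nonneg L n),
    rpow_two_eq (fL_nonneg L n)]

lemma quad_sum (hL : 2 ≤ L) :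
    quadForm ((((4:ℝ)):ℂ) • 1 - H0Z2) (φL L hL) =
      ∑ n ∈ box (L + 2), (4 * fL L n ^ 2 -
        fL L n * (fL L (n + (1,0)) + fL L (n + (-1,0)) + fL L (n + (0,1)) + fL L (n + (0,-1)))) := by
  have hco : ∀ n : ℤ × ℤ, (((((4:ℝ)):ℂ) • 1 - H0Z2) (φL L hL) : ℤ × ℤ → ℂ) n
      = (((4 * fL L n - (fL L (n + (1,0)) + fL L (n + (-1,0)) + fL L (n + (0,1))
          + fL L (n + (0,-1)))) : ℝ) : ℂ) := by
    intro n
    rw [ContinuousLinearMap.sub_apply, ContinuousLinearMap.smul_apply,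
      ContinuousLinearMap.one_apply]
    rw [lp.coeFn_sub, Pi.sub_apply, lp.coeFn_smul, Pi.smul_apply, smul_eq_mul,
      H0Z2_apply]
    simp only [φL_apply]
    push_cast
    ring
  have hval : ∀ n : ℤ × ℤ, (inner ℂ ((φL L hL : ℤ × ℤ → ℂ) n)
        ((((((4:ℝ)):ℂ) • 1 - H0Z2) (φL L hL) : ℤ × ℤ → ℂ) n) : ℂ)
      = (((4 * fL L n ^ 2 - fL L n * (fL L (n + (1,0)) + fL L (n + (-1,0)) + fL L (n + (0,1))
          + fL L (n + (0,-1)))) : ℝ) : ℂ) := by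
    intro n
    rw [RCLike.inner_apply, hco n, φL_apply, Complex.conj_ofReal]
    push_cast
    ring
  unfold quadForm
  rw [lp.inner_eq_tsum, tsum_congr hval, tsum_eq_sum (s := box (L + 2)) ?_,
    ← Complex.ofReal_sum, Complex.ofReal_re]
  intro n hn
  have h0 : fL L n = 0 := by
    by_contra h
    exact hn (box_mono (by omega) (fL_mem_box L hL h))
  simp [h0]

lemma sum_shift (hL : 2 ≤ L) (g : ℤ × ℤ → ℝ) (hg : ∀ n, g n ≠ 0 → n ∈ box L)
    (j : ℤ × ℤ) (hj1 : |j.1| ≤ 2) (hj2 : |j.2| ≤ 2) :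
    ∑ n ∈ box (L + 2), g (n + j) = ∑ n ∈ box (L + 2), g n := by
  have hj1' := abs_le.mp hj1
  have hj2' := abs_le.mp hj2
  have h1 : ∑ n ∈ box (L + 2), g (n + j)
      = ∑ m ∈ (box (L + 2)).map (addRightEmbedding j), g m := by
    rw [Finset.sum_map]
    apply Finset.sum_congr rfl
    intro x _
    rw [addRightEmbedding_apply]
  rw [h1]
  have hsub1 : box L ⊆ (box (L + 2)).map (addRightEmbedding j) := by
    intro m hm
    rw [mem_box] at hm
    rw [Finset.mem_map]
    refine ⟨m - j, ?_, by rw [addRightEmbedding_apply]; exact sub_add_cancel m j⟩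
    rw [mem_box]
    simp only [Prod.fst_sub, Prod.snd_sub]
    omega
  have trans1 : ∑ m ∈ (box (L + 2)).map (addRightEmbedding j), g m = ∑ m ∈ box L, g m := by
    symm
    apply Finset.sum_subset hsub1
    intro x _ hx
    by_contra h
    exact hx (hg x h)
  have trans2 : ∑ n ∈ box (L + 2), g n = ∑ n ∈ box L, g n := by
    symm
    apply Finset.sum_subset (box_mono (by omega))
    intro x _ hx
    by_contra h
    exact hx (hg x h)
  rw [trans1, trans2]

lemma quad_id (hL : 2 ≤ L) :
    quadForm ((((4:ℝ)):ℂ) • 1 - H0Z2) (φL L hL) =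
      (∑ n ∈ box (L + 2), (fL L n - fL L (n + (1,0))) ^ 2
       + ∑ n ∈ box (L + 2), (fL L n - fL L (n + (-1,0))) ^ 2
       + ∑ n ∈ box (L + 2), (fL L n - fL L (n + (0,1))) ^ 2
       + ∑ n ∈ box (L + 2), (fL L n - fL L (n + (0,-1))) ^ 2) / 2 := by
  have hsupp : ∀ n, fL L n ^ 2 ≠ 0 → n ∈ box L := by
    intro n h
    apply fL_mem_box L hL
    intro h0
    exact h (by rw [h0]; ring)
  have key : ∀ j : ℤ × ℤ, |j.1| ≤ 2 → |j.2| ≤ 2 →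
      ∑ n ∈ box (L + 2), fL L n * fL L (n + j)
        = ∑ n ∈ box (L + 2), fL L n ^ 2
          - (∑ n ∈ box (L + 2), (fL L n - fL L (n + j)) ^ 2) / 2 := by
    intro j h1 h2
    have e1 : ∑ n ∈ box (L + 2), fL L (n + j) ^ 2 = ∑ n ∈ box (L + 2), fL L n ^ 2 :=
      sum_shift L hL (fun n => fL L n ^ 2) hsupp j h1 h2
    have e2 : ∑ n ∈ box (L + 2), (fL L n - fL L (n + j)) ^ 2
        = ∑ n ∈ box (L + 2), fL L n ^ 2 + ∑ n ∈ box (L + 2), fL L (n + j) ^ 2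
          - 2 * ∑ n ∈ box (L + 2), fL L n * fL L (n + j) := by
      rw [← Finset.sum_add_distrib, Finset.mul_sum, ← Finset.sum_sub_distrib]
      exact Finset.sum_congr rfl fun n _ => by ring
    linarith
  rw [quad_sum L hL]
  have expand : ∑ n ∈ box (L + 2), (4 * fL L n ^ 2 -
        fL L n * (fL L (n + (1,0)) + fL L (n + (-1,0)) + fL L (n + (0,1)) + fL L (n + (0,-1))))
      = 4 * ∑ n ∈ box (L + 2), fL L n ^ 2
        - ∑ n ∈ box (L + 2), fL L n * fL L (n + (1,0))
        - ∑ n ∈ box (L + 2), fL L n * fL L (n + (-1,0))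
        - ∑ n ∈ box (L + 2), fL L n * fL L (n + (0,1))
        - ∑ n ∈ box (L + 2), fL L n * fL L (n + (0,-1)) := by
    rw [Finset.mul_sum, ← Finset.sum_sub_distrib, ← Finset.sum_sub_distrib,
      ← Finset.sum_sub_distrib, ← Finset.sum_sub_distrib]
    exact Finset.sum_congr rfl fun n _ => by ring
  rw [expand, key (1,0) (by norm_num) (by norm_num), key (-1,0) (by norm_num) (by norm_num),
    key (0,1) (by norm_num) (by norm_num), key (0,-1) (by norm_num) (by norm_num)]
  ring

/-! ### Pointwise gradient bound -/

lemma rad_mk (a b : ℤ) : rad (a, b) = |a| + |b| := rfl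

/-- Weight dominating squared discrete gradients of `fL`. -/
def Wt (n : ℤ × ℤ) : ℝ :=
  if rad n ≤ L then (1 / (((max (rad n) 1 : ℤ) : ℝ) * Real.log ((L : ℝ) + 1))) ^ 2 else 0

lemma diff_bound (hL : 2 ≤ L) (j : ℤ × ℤ) (hj : rad j = 1) (n : ℤ × ℤ) :
    (fL L n - fL L (n + j)) ^ 2 ≤ Wt L n := by
  have hΛ := logL_pos L hL
  have hr1 : rad (n + j) ≤ rad n + 1 := by have := rad_add_le n j; omega
  have hr2 : rad n ≤ rad (n + j) + 1 := by have := rad_le_add n j; omega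
  have hrn := rad_nonneg n
  have hrm := rad_nonneg (n + j)
  by_cases hc : rad n ≤ L
  · rw [Wt, if_pos hc]
    have hMZ : (1 : ℤ) ≤ max (rad n) 1 := le_max_right _ _
    have hM0 : (0:ℝ) < ((max (rad n) 1 : ℤ) : ℝ) := by exact_mod_cast lt_of_lt_of_le one_pos hMZ
    have h1 : |fL L n - fL L (n + j)|
        ≤ |Real.log ((rad n : ℝ) + 1) - Real.log ((rad (n + j) : ℝ) + 1)|
            / Real.log ((L : ℝ) + 1) := by
      unfold fL
      refine (abs_max_sub_max_le_abs _ _ _).trans ?_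
      rw [show (1 - Real.log ((rad n : ℝ) + 1) / Real.log ((L : ℝ) + 1))
            - (1 - Real.log ((rad (n + j) : ℝ) + 1) / Real.log ((L : ℝ) + 1))
          = (Real.log ((rad (n + j) : ℝ) + 1) - Real.log ((rad n : ℝ) + 1))
              / Real.log ((L : ℝ) + 1) from by ring,
        abs_div, abs_of_pos hΛ, abs_sub_comm]
    have h2 : |Real.log ((rad n : ℝ) + 1) - Real.log ((rad (n + j) : ℝ) + 1)|
        ≤ 1 / ((max (rad n) 1 : ℤ) : ℝ) := by
      apply abs_log_sub_le
      · have : (0:ℝ) ≤ (rad n : ℝ) := by exact_mod_cast hrn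
        linarith
      · have : (0:ℝ) ≤ (rad (n + j) : ℝ) := by exact_mod_cast hrm
        linarith
      · rw [show ((rad n : ℝ) + 1) - ((rad (n + j) : ℝ) + 1) = ((rad n - rad (n + j) : ℤ) : ℝ)
          from by push_cast; ring, ← Int.cast_abs]
        exact_mod_cast (abs_le.mpr ⟨by omega, by omega⟩ : |rad n - rad (n + j)| ≤ 1)
      · exact hM0
      · exact_mod_cast (by omega : max (rad n) 1 ≤ rad n + 1)
      · exact_mod_cast (by omega : max (rad n) 1 ≤ rad (n + j) + 1)
    rw [← sq_abs]
    apply pow_le_pow_left₀ (abs_nonneg _)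
    calc |fL L n - fL L (n + j)|
        ≤ |Real.log ((rad n : ℝ) + 1) - Real.log ((rad (n + j) : ℝ) + 1)|
            / Real.log ((L : ℝ) + 1) := h1
      _ ≤ (1 / ((max (rad n) 1 : ℤ) : ℝ)) / Real.log ((L : ℝ) + 1) :=
          (div_le_div_iff_of_pos_right hΛ).mpr h2
      _ = 1 / (((max (rad n) 1 : ℤ) : ℝ) * Real.log ((L : ℝ) + 1)) := by rw [div_div]
  · rw [Wt, if_neg hc]
    rw [fL_zero L hL (by omega), fL_zero L hL (by omega)]
    norm_num

/-! ### Summing the weights -/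

lemma sum_Wt (hL : 2 ≤ L) :
    ∑ n ∈ box (L + 2), Wt L n ≤ 25 / Real.log ((L : ℝ) + 1) := by
  have hΛ := logL_pos L hL
  have h1Λ := one_le_logL L hL
  have step1 : ∑ n ∈ box (L + 2), Wt L n
      ≤ ∑ n ∈ box L, (1 / (((max (rad n) 1 : ℤ) : ℝ) * Real.log ((L : ℝ) + 1))) ^ 2 := by
    have hfil : ∑ n ∈ box (L + 2), Wt L n
        = ∑ n ∈ (box (L + 2)).filter (fun n => rad n ≤ L),
            (1 / (((max (rad n) 1 : ℤ) : ℝ) * Real.log ((L : ℝ) + 1))) ^ 2 := by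
      simp only [Wt]
      rw [Finset.sum_filter]
    rw [hfil]
    apply Finset.sum_le_sum_of_subset_of_nonneg
    · intro n hn
      rw [Finset.mem_filter] at hn
      exact mem_box_of_rad (by omega) hn.2
    · intro n _ _
      positivity
  have step3 : ∑ n ∈ box L, (1 / ((max (rad n) 1 : ℤ) : ℝ)) ^ 2
      ≤ 25 * Real.log ((L : ℝ) + 1) := by
    rw [box, Finset.sum_product]
    have inner : ∀ a : ℤ, ∑ b ∈ Finset.Icc (-L) L, (1 / ((max (|a| + |b|) 1 : ℤ) : ℝ)) ^ 2
        ≤ 5 / ((max |a| 1 : ℤ) : ℝ) := by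
      intro a
      have haz := abs_nonneg a
      have hMZ : (1 : ℤ) ≤ max |a| 1 := le_max_right _ _
      have hM0 : (0:ℝ) < ((max |a| 1 : ℤ) : ℝ) := by exact_mod_cast lt_of_lt_of_le one_pos hMZ
      have hM1 : (1:ℝ) ≤ ((max |a| 1 : ℤ) : ℝ) := by exact_mod_cast hMZ
      rw [zsum_abs_Icc (fun t => (1 / ((max (|a| + t) 1 : ℤ) : ℝ)) ^ 2) L (by omega)]
      have hu0 : (1 / ((max (|a| + 0) 1 : ℤ) : ℝ)) ^ 2 ≤ 1 / ((max |a| 1 : ℤ) : ℝ) := by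
        rw [add_zero]
        rw [show (1 / ((max |a| 1 : ℤ) : ℝ)) ^ 2 = 1 / ((max |a| 1 : ℤ) : ℝ) ^ 2 from by ring]
        apply div_le_div₀ (by norm_num) le_rfl hM0
        nlinarith
      have tail : ∑ t ∈ Finset.Icc (1:ℤ) L, (1 / ((max (|a| + t) 1 : ℤ) : ℝ)) ^ 2
          ≤ 2 / ((max |a| 1 : ℤ) : ℝ) := by
        rcases eq_or_lt_of_le haz with ha0 | ha1
        · -- |a| = 0
          have heq : ∀ t ∈ Finset.Icc (1:ℤ) L, (1 / ((max (|a| + t) 1 : ℤ) : ℝ)) ^ 2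
              = (1:ℝ) / (t:ℝ) ^ 2 := by
            intro t ht
            rw [Finset.mem_Icc] at ht
            rw [show max (|a| + t) 1 = t from by omega]
            ring
          rw [Finset.sum_congr rfl heq, show max |a| 1 = 1 from by omega]
          simpa using zsum_inv_sq L
        · -- 1 ≤ |a|
          have heq : ∀ t ∈ Finset.Icc (1:ℤ) L, (1 / ((max (|a| + t) 1 : ℤ) : ℝ)) ^ 2
              = (1:ℝ) / ((t:ℝ) + ((|a| : ℤ) : ℝ)) ^ 2 := by
            intro t ht
            rw [Finset.mem_Icc] at ht
            rw [show max (|a| + t) 1 = |a| + t from by omega,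
              show ((|a| + t : ℤ) : ℝ) = (t:ℝ) + ((|a| : ℤ) : ℝ) from by push_cast; ring,
              div_pow, one_pow]
          rw [Finset.sum_congr rfl heq, show max |a| 1 = |a| from by omega]
          have := zsum_inv_sq_shift ((|a| : ℤ) : ℝ) (by exact_mod_cast ha1) L
          have hpos : (0:ℝ) < ((|a| : ℤ) : ℝ) := by exact_mod_cast ha1
          calc ∑ t ∈ Finset.Icc (1:ℤ) L, (1:ℝ) / ((t:ℝ) + ((|a| : ℤ) : ℝ)) ^ 2
              ≤ 1 / ((|a| : ℤ) : ℝ) := this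
            _ ≤ 2 / ((|a| : ℤ) : ℝ) := by
                apply div_le_div₀ (by norm_num) (by norm_num) hpos le_rfl
      calc (1 / ((max (|a| + 0) 1 : ℤ) : ℝ)) ^ 2
            + 2 * ∑ t ∈ Finset.Icc (1:ℤ) L, (1 / ((max (|a| + t) 1 : ℤ) : ℝ)) ^ 2
          ≤ 1 / ((max |a| 1 : ℤ) : ℝ) + 2 * (2 / ((max |a| 1 : ℤ) : ℝ)) :=
            add_le_add hu0 (mul_le_mul_of_nonneg_left tail (by norm_num))
        _ = 5 / ((max |a| 1 : ℤ) : ℝ) := by ring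
    have houter : ∑ a ∈ Finset.Icc (-L) L,
          (∑ b ∈ Finset.Icc (-L) L, (1 / ((max (rad (a, b)) 1 : ℤ) : ℝ)) ^ 2)
        ≤ ∑ a ∈ Finset.Icc (-L) L, 5 / ((max |a| 1 : ℤ) : ℝ) := by
      apply Finset.sum_le_sum
      intro a _
      simpa only [rad_mk] using inner a
    refine houter.trans ?_
    rw [zsum_abs_Icc (fun t => 5 / ((max t 1 : ℤ) : ℝ)) L (by omega)]
    have heq : ∀ t ∈ Finset.Icc (1:ℤ) L, (5:ℝ) / ((max t 1 : ℤ) : ℝ) = 5 * (1 / (t:ℝ)) := by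
      intro t ht
      rw [Finset.mem_Icc] at ht
      rw [show max t 1 = t from by omega]
      ring
    rw [Finset.sum_congr rfl heq, ← Finset.mul_sum]
    have hharm := zsum_harmonic L (by omega)
    have h50 : (5:ℝ) / ((max (0:ℤ) 1 : ℤ) : ℝ) = 5 := by norm_num
    rw [h50]
    have hsum_nonneg : (0:ℝ) ≤ ∑ t ∈ Finset.Icc (1:ℤ) L, (1:ℝ) / (t:ℝ) := by
      apply Finset.sum_nonneg
      intro t ht
      rw [Finset.mem_Icc] at ht
      have : (0:ℝ) < (t:ℝ) := by exact_mod_cast lt_of_lt_of_le one_pos ht.1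
      positivity
    nlinarith [hharm, h1Λ]
  calc ∑ n ∈ box (L + 2), Wt L n
      ≤ ∑ n ∈ box L, (1 / (((max (rad n) 1 : ℤ) : ℝ) * Real.log ((L : ℝ) + 1))) ^ 2 := step1
    _ = (1 / Real.log ((L : ℝ) + 1) ^ 2) * ∑ n ∈ box L, (1 / ((max (rad n) 1 : ℤ) : ℝ)) ^ 2 := by
        rw [Finset.mul_sum]
        exact Finset.sum_congr rfl fun n _ => by ring
    _ ≤ (1 / Real.log ((L : ℝ) + 1) ^ 2) * (25 * Real.log ((L : ℝ) + 1)) := by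
        apply mul_le_mul_of_nonneg_left step3 (by positivity)
    _ = 25 / Real.log ((L : ℝ) + 1) := by
        field_simp

lemma quad_nonneg (hL : 2 ≤ L) :
    0 ≤ quadForm ((((4:ℝ)):ℂ) • 1 - H0Z2) (φL L hL) := by
  rw [quad_id L hL]
  positivity

lemma quad_le (hL : 2 ≤ L) :
    quadForm ((((4:ℝ)):ℂ) • 1 - H0Z2) (φL L hL) ≤ 50 / Real.log ((L : ℝ) + 1) := by
  rw [quad_id L hL]
  have hb : ∀ j : ℤ × ℤ, rad j = 1 →
      ∑ n ∈ box (L + 2), (fL L n - fL L (n + j)) ^ 2 ≤ 25 / Real.log ((L : ℝ) + 1) :=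
    fun j hj => (Finset.sum_le_sum fun n _ => diff_bound L hL j hj n).trans (sum_Wt L hL)
  have h1 := hb (1,0) (by decide)
  have h2 := hb (-1,0) (by decide)
  have h3 := hb (0,1) (by decide)
  have h4 := hb (0,-1) (by decide)
  set u := (25:ℝ) / Real.log ((L:ℝ) + 1) with hu
  rw [show (50:ℝ) / Real.log ((L:ℝ) + 1) = 2 * u from by rw [hu]; ring]
  linarith

/-! ### Norm bounds -/

lemma norm_upper (hL : 2 ≤ L) :
    ‖φL L hL‖ ^ 2 ≤ 200 * (L:ℝ) ^ 2 / Real.log ((L:ℝ) + 1) ^ 2 := by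
  have hΛ := logL_pos L hL
  have hL' : (2:ℝ) ≤ (L:ℝ) := by exact_mod_cast hL
  rw [normsq_φL]
  have pt : ∀ n ∈ box L, fL L n ^ 2
      ≤ (4 * ((L:ℝ)+1) / Real.log ((L:ℝ)+1) ^ 2)
          * ((1 / Real.sqrt (((|n.1| : ℤ):ℝ) + 1)) * (1 / Real.sqrt (((|n.2| : ℤ):ℝ) + 1))) := by
    intro n _
    have hr0 : (0:ℝ) ≤ (rad n : ℝ) := by exact_mod_cast rad_nonneg n
    have ht0 : (0:ℝ) < ((L:ℝ)+1) / ((rad n : ℝ)+1) := by positivity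
    have h1 : fL L n ≤ 2 * Real.sqrt (((L:ℝ)+1) / ((rad n : ℝ)+1)) / Real.log ((L:ℝ)+1) := by
      rw [fL_eq L hL n]
      apply max_le
      · exact (div_le_div_iff_of_pos_right hΛ).mpr (log_le_two_sqrt ht0)
      · positivity
    have h2 : fL L n ^ 2 ≤ 4 * (((L:ℝ)+1) / ((rad n : ℝ)+1)) / Real.log ((L:ℝ)+1) ^ 2 := by
      calc fL L n ^ 2
          ≤ (2 * Real.sqrt (((L:ℝ)+1) / ((rad n : ℝ)+1)) / Real.log ((L:ℝ)+1)) ^ 2 :=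
            pow_le_pow_left₀ (fL_nonneg L n) h1 2
        _ = 4 * (Real.sqrt (((L:ℝ)+1) / ((rad n : ℝ)+1))) ^ 2 / Real.log ((L:ℝ)+1) ^ 2 := by
            ring
        _ = 4 * (((L:ℝ)+1) / ((rad n : ℝ)+1)) / Real.log ((L:ℝ)+1) ^ 2 := by
            rw [Real.sq_sqrt ht0.le]
    have ha0 : (0:ℝ) ≤ ((|n.1| : ℤ):ℝ) := by exact_mod_cast abs_nonneg n.1
    have hb0 : (0:ℝ) ≤ ((|n.2| : ℤ):ℝ) := by exact_mod_cast abs_nonneg n.2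
    have hs1 : (0:ℝ) < Real.sqrt (((|n.1| : ℤ):ℝ) + 1) := Real.sqrt_pos.2 (by linarith)
    have hs2 : (0:ℝ) < Real.sqrt (((|n.2| : ℤ):ℝ) + 1) := Real.sqrt_pos.2 (by linarith)
    have h3 : Real.sqrt (((|n.1| : ℤ):ℝ) + 1) * Real.sqrt (((|n.2| : ℤ):ℝ) + 1)
        ≤ (rad n : ℝ) + 1 := by
      rw [← Real.sqrt_mul (by linarith) _]
      have hradeq : (rad n : ℝ) = ((|n.1| : ℤ):ℝ) + ((|n.2| : ℤ):ℝ) := by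
        rw [show rad n = |n.1| + |n.2| from rfl]
        push_cast
        ring
      have hle : (((|n.1| : ℤ):ℝ) + 1) * (((|n.2| : ℤ):ℝ) + 1) ≤ ((rad n : ℝ)+1) ^ 2 := by
        rw [hradeq]; nlinarith
      calc Real.sqrt ((((|n.1| : ℤ):ℝ) + 1) * (((|n.2| : ℤ):ℝ) + 1))
          ≤ Real.sqrt (((rad n : ℝ)+1) ^ 2) := Real.sqrt_le_sqrt hle
        _ = (rad n : ℝ)+1 := Real.sqrt_sq (by linarith)
    have h4 : ((L:ℝ)+1) / ((rad n : ℝ)+1)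
        ≤ ((L:ℝ)+1) * ((1 / Real.sqrt (((|n.1| : ℤ):ℝ) + 1))
            * (1 / Real.sqrt (((|n.2| : ℤ):ℝ) + 1))) := by
      have hinv : (1:ℝ) / ((rad n : ℝ)+1)
          ≤ 1 / (Real.sqrt (((|n.1| : ℤ):ℝ) + 1) * Real.sqrt (((|n.2| : ℤ):ℝ) + 1)) :=
        one_div_le_one_div_of_le (by positivity) h3
      calc ((L:ℝ)+1) / ((rad n : ℝ)+1) = ((L:ℝ)+1) * (1 / ((rad n : ℝ)+1)) := by ring
        _ ≤ ((L:ℝ)+1) * (1 / (Real.sqrt (((|n.1| : ℤ):ℝ) + 1)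
              * Real.sqrt (((|n.2| : ℤ):ℝ) + 1))) :=
            mul_le_mul_of_nonneg_left hinv (by linarith)
        _ = ((L:ℝ)+1) * ((1 / Real.sqrt (((|n.1| : ℤ):ℝ) + 1))
              * (1 / Real.sqrt (((|n.2| : ℤ):ℝ) + 1))) := by
            rw [one_div_mul_eq_div, div_div]
            ring
    calc fL L n ^ 2 ≤ 4 * (((L:ℝ)+1) / ((rad n : ℝ)+1)) / Real.log ((L:ℝ)+1) ^ 2 := h2
      _ ≤ 4 * (((L:ℝ)+1) * ((1 / Real.sqrt (((|n.1| : ℤ):ℝ) + 1))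
            * (1 / Real.sqrt (((|n.2| : ℤ):ℝ) + 1)))) / Real.log ((L:ℝ)+1) ^ 2 := by
          apply div_le_div_of_nonneg_right ?_ (by positivity)
          linarith
      _ = (4 * ((L:ℝ)+1) / Real.log ((L:ℝ)+1) ^ 2)
            * ((1 / Real.sqrt (((|n.1| : ℤ):ℝ) + 1)) * (1 / Real.sqrt (((|n.2| : ℤ):ℝ) + 1))) := by
          ring
  have hsum := Finset.sum_le_sum pt
  have hprod : ∑ n ∈ box L, (4 * ((L:ℝ)+1) / Real.log ((L:ℝ)+1) ^ 2)
        * ((1 / Real.sqrt (((|n.1| : ℤ):ℝ) + 1)) * (1 / Real.sqrt (((|n.2| : ℤ):ℝ) + 1)))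
      = (4 * ((L:ℝ)+1) / Real.log ((L:ℝ)+1) ^ 2)
        * ((∑ a ∈ Finset.Icc (-L) L, 1 / Real.sqrt (((|a| : ℤ):ℝ) + 1))
           * (∑ b ∈ Finset.Icc (-L) L, 1 / Real.sqrt (((|b| : ℤ):ℝ) + 1))) := by
    rw [Finset.sum_mul_sum, box, Finset.sum_product, Finset.mul_sum]
    refine Finset.sum_congr rfl fun a _ => ?_
    rw [Finset.mul_sum]
  have hS : ∑ a ∈ Finset.Icc (-L) L, 1 / Real.sqrt (((|a| : ℤ):ℝ) + 1)
      ≤ 4 * Real.sqrt ((L:ℝ) + 1) := by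
    rw [zsum_abs_Icc (fun t => 1 / Real.sqrt ((t:ℝ) + 1)) L (by omega)]
    have hsplit : Finset.Icc (0:ℤ) L = insert 0 (Finset.Icc (1:ℤ) L) := by
      ext x; simp only [Finset.mem_Icc, Finset.mem_insert]; omega
    have h01 := zsum_inv_sqrt L (by omega : (0:ℤ) ≤ L)
    rw [hsplit, Finset.sum_insert (by simp)] at h01
    have hz : 1 / Real.sqrt (((0:ℤ):ℝ) + 1) = 1 := by
      norm_num
    rw [hz] at h01 ⊢
    linarith
  have hSS : (∑ a ∈ Finset.Icc (-L) L, 1 / Real.sqrt (((|a| : ℤ):ℝ) + 1))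
        * (∑ b ∈ Finset.Icc (-L) L, 1 / Real.sqrt (((|b| : ℤ):ℝ) + 1))
      ≤ 16 * ((L:ℝ) + 1) := by
    have hnn : (0:ℝ) ≤ ∑ a ∈ Finset.Icc (-L) L, 1 / Real.sqrt (((|a| : ℤ):ℝ) + 1) := by
      apply Finset.sum_nonneg
      intro a _
      positivity
    have hsq : Real.sqrt ((L:ℝ) + 1) ^ 2 = (L:ℝ) + 1 := Real.sq_sqrt (by linarith)
    nlinarith [hS, hnn, Real.sqrt_nonneg ((L:ℝ) + 1)]
  calc ∑ n ∈ box L, fL L n ^ 2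
      ≤ (4 * ((L:ℝ)+1) / Real.log ((L:ℝ)+1) ^ 2)
        * ((∑ a ∈ Finset.Icc (-L) L, 1 / Real.sqrt (((|a| : ℤ):ℝ) + 1))
           * (∑ b ∈ Finset.Icc (-L) L, 1 / Real.sqrt (((|b| : ℤ):ℝ) + 1))) := by
        rw [← hprod]; exact hsum
    _ ≤ (4 * ((L:ℝ)+1) / Real.log ((L:ℝ)+1) ^ 2) * (16 * ((L:ℝ) + 1)) :=
        mul_le_mul_of_nonneg_left hSS (by positivity)
    _ = 64 * ((L:ℝ)+1) ^ 2 / Real.log ((L:ℝ)+1) ^ 2 := by ring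
    _ ≤ 200 * (L:ℝ) ^ 2 / Real.log ((L:ℝ)+1) ^ 2 := by
        apply div_le_div_of_nonneg_right ?_ (by positivity)
        nlinarith

lemma norm_lower (hL : 2 ≤ L) :
    Real.log ((3:ℝ)/2) ^ 2 / 16 * (L:ℝ) ^ 2 / Real.log ((L:ℝ) + 1) ^ 2 ≤ ‖φL L hL‖ ^ 2 := by
  have hΛ := logL_pos L hL
  have hL' : (2:ℝ) ≤ (L:ℝ) := by exact_mod_cast hL
  rw [normsq_φL]
  set m := L / 4 with hm
  have hm0 : 0 ≤ m := by omega
  have h4m : 4 * m ≤ L := by omega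
  have h4m' : L - 3 ≤ 4 * m := by omega
  have hm0R : (0:ℝ) ≤ (m:ℝ) := by exact_mod_cast hm0
  have hmR : 4 * (m:ℝ) ≤ (L:ℝ) := by exact_mod_cast h4m
  have hmR' : (L:ℝ) - 3 ≤ 4 * (m:ℝ) := by exact_mod_cast h4m'
  have hlog32 : (0:ℝ) ≤ Real.log ((3:ℝ)/2) := Real.log_nonneg (by norm_num)
  have hpt : ∀ n ∈ box m, (Real.log ((3:ℝ)/2) / Real.log ((L:ℝ)+1)) ^ 2 ≤ fL L n ^ 2 := by
    intro n hn
    rw [mem_box] at hn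
    have l1 : |n.1| ≤ m := abs_le.mpr ⟨hn.1.1, hn.1.2⟩
    have l2 : |n.2| ≤ m := abs_le.mpr ⟨hn.2.1, hn.2.2⟩
    have hr2m : rad n ≤ 2 * m := by
      rw [show rad n = |n.1| + |n.2| from rfl]; omega
    have hrr : (0:ℝ) ≤ (rad n : ℝ) := by exact_mod_cast rad_nonneg n
    have hcast : (rad n : ℝ) ≤ 2 * (m:ℝ) := by exact_mod_cast hr2m
    have hlog1 : Real.log ((rad n : ℝ)+1) ≤ Real.log (2*(m:ℝ)+1) :=
      Real.log_le_log (by linarith) (by linarith)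
    have hlog2 : Real.log ((3:ℝ)/2) + Real.log (2*(m:ℝ)+1) ≤ Real.log ((L:ℝ)+1) := by
      rw [← Real.log_mul (by norm_num) (by positivity)]
      apply Real.log_le_log (by positivity)
      nlinarith
    have hfl : Real.log ((3:ℝ)/2) / Real.log ((L:ℝ)+1) ≤ fL L n := by
      unfold fL
      refine le_trans ?_ (le_max_left _ _)
      rw [show (1 : ℝ) - Real.log ((rad n : ℝ)+1) / Real.log ((L:ℝ)+1)
          = (Real.log ((L:ℝ)+1) - Real.log ((rad n : ℝ)+1)) / Real.log ((L:ℝ)+1) from by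
        field_simp]
      apply (div_le_div_iff_of_pos_right hΛ).mpr
      linarith
    have hfl0 : (0:ℝ) ≤ Real.log ((3:ℝ)/2) / Real.log ((L:ℝ)+1) := by positivity
    exact pow_le_pow_left₀ hfl0 hfl 2
  have htn : (((2*m+1 : ℤ).toNat : ℕ) : ℝ) = ((2*m+1 : ℤ) : ℝ) := by
    rw [show (((2*m+1 : ℤ).toNat : ℕ) : ℝ) = (((2*m+1 : ℤ).toNat : ℤ) : ℝ) from by push_cast; ring,
      Int.toNat_of_nonneg (by omega : (0:ℤ) ≤ 2*m+1)]
  have hcard : (((box m).card : ℕ) : ℝ) = ((2*m+1 : ℤ) : ℝ) ^ 2 := by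
    rw [box, Finset.card_product, Int.card_Icc,
      show m + 1 - -m = 2*m+1 from by ring, Nat.cast_mul, htn]
    ring
  have hlower := Finset.card_nsmul_le_sum (box m)
    (fun n => fL L n ^ 2) ((Real.log ((3:ℝ)/2) / Real.log ((L:ℝ)+1)) ^ 2) hpt
  rw [nsmul_eq_mul, hcard] at hlower
  have hsub : ∑ n ∈ box m, fL L n ^ 2 ≤ ∑ n ∈ box L, fL L n ^ 2 :=
    Finset.sum_le_sum_of_subset_of_nonneg (box_mono (by omega)) (fun n _ _ => sq_nonneg _)
  have h2m1 : (L:ℝ)/4 ≤ ((2*m+1 : ℤ) : ℝ) := by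
    push_cast
    linarith
  have hfinal : Real.log ((3:ℝ)/2) ^ 2 / 16 * (L:ℝ) ^ 2 / Real.log ((L:ℝ) + 1) ^ 2
      ≤ ((2*m+1 : ℤ) : ℝ) ^ 2 * (Real.log ((3:ℝ)/2) / Real.log ((L:ℝ)+1)) ^ 2 := by
    have hq : ((L:ℝ)/4) ^ 2 ≤ ((2*m+1 : ℤ) : ℝ) ^ 2 :=
      pow_le_pow_left₀ (by linarith) h2m1 2
    calc Real.log ((3:ℝ)/2) ^ 2 / 16 * (L:ℝ) ^ 2 / Real.log ((L:ℝ) + 1) ^ 2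
        = ((L:ℝ)/4) ^ 2 * (Real.log ((3:ℝ)/2) / Real.log ((L:ℝ)+1)) ^ 2 := by ring
      _ ≤ ((2*m+1 : ℤ) : ℝ) ^ 2 * (Real.log ((3:ℝ)/2) / Real.log ((L:ℝ)+1)) ^ 2 :=
          mul_le_mul_of_nonneg_right hq (by positivity)
  linarith

lemma fL_center (hL : 2 ≤ L) : fL L (0, 0) = 1 := by
  have : rad (0, 0) = 0 := by rw [rad_mk]; norm_num
  rw [fL, this]
  norm_num

end DHKS

namespace DHKS

/-- Proposition 4.4: there are constants `0 < c₁ ≤ c₂ < ∞` such that for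
every `L ≥ 2` there is `φ_L ∈ ℓ²(ℤ²)` supported in `{|n₁|+|n₂| ≤ L}` with `φ_L(0,0) = 1`,
`0 ≤ ⟨φ_L, (4−H₀)φ_L⟩ ≤ c₂/log(L+1)` and `c₁ L²/log(L+1)² ≤ ‖φ_L‖² ≤ c₂ L²/log(L+1)²`. -/
theorem statement8 :
    ∃ c₁ c₂ : ℝ, 0 < c₁ ∧ c₁ ≤ c₂ ∧
      ∀ L : ℤ, 2 ≤ L →
        ∃ φ : L2 (ℤ × ℤ),
          (∀ n : ℤ × ℤ, (φ : ℤ × ℤ → ℂ) n ≠ 0 → |n.1| + |n.2| ≤ L) ∧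
          (φ : ℤ × ℤ → ℂ) (0, 0) = 1 ∧
          0 ≤ quadForm ((((4:ℝ)):ℂ) • 1 - H0Z2) φ ∧
          quadForm ((((4:ℝ)):ℂ) • 1 - H0Z2) φ ≤ c₂ / Real.log ((L:ℝ) + 1) ∧
          c₁ * (L:ℝ) ^ 2 / Real.log ((L:ℝ) + 1) ^ 2 ≤ ‖φ‖ ^ 2 ∧
          ‖φ‖ ^ 2 ≤ c₂ * (L:ℝ) ^ 2 / Real.log ((L:ℝ) + 1) ^ 2 := by
  have hlog32 : (0:ℝ) < Real.log ((3:ℝ)/2) := Real.log_pos (by norm_num)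
  have hlog32' : Real.log ((3:ℝ)/2) ≤ 1/2 := by
    have := Real.log_le_sub_one_of_pos (show (0:ℝ) < 3/2 by norm_num)
    linarith
  refine ⟨Real.log ((3:ℝ)/2) ^ 2 / 16, 200, by positivity, by nlinarith, ?_⟩
  intro L hL
  have hΛ := logL_pos L hL
  refine ⟨φL L hL, ?_, ?_, quad_nonneg L hL, ?_, norm_lower L hL, norm_upper L hL⟩
  · intro n hn
    rw [φL_apply] at hn
    exact fL_supp L hL (Complex.ofReal_ne_zero.mp hn)
  · rw [φL_apply, fL_center L hL]
    norm_num
  · refine (quad_le L hL).trans ?_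
    apply div_le_div_of_nonneg_right ?_ hΛ.le
    norm_num

end DHKS
end
end
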